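/- Let k ≥ 1 be an integer and let α_1, …, α_k be positive real numbers with α_1 + ⋯ + α_k = 2π. Set θ_0 = 0 and θ_i = α_1 + ⋯ + α_i, let R_i = {r·(cos θ_i, sin θ_i) : r ≥ 0} for 0 ≤ i ≤ k be the crease rays, and let S_i = {r·(cos t, sin t) : r ≥ 0, θ_{i−1} ≤ t ≤ θ_i} for 1 ≤ i ≤ k be the closed sectors. Then there exists a function f : ℝ² → ℝ² that is continuous, whose restriction to each sector S_i preserves Euclidean distances, and which is non-differentiable at every point of R_i \ {(0,0)} for each 1 ≤ i ≤ k, if and only if k is even and α_1 − α_2 + α_3 − ⋯ − α_k = 0. -/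

import Mathlib

open Real

/-- The cumulative angle `θ i = α 1 + ⋯ + α i` (0-indexed: sum of `α 0, …, α (i-1)`). -/
noncomputable def cumAngle (α : ℕ → ℝ) (i : ℕ) : ℝ := ∑ j ∈ Finset.range i, α j

/-- The unit vector in the plane at angle `t`. -/
noncomputable def dirVec (t : ℝ) : EuclideanSpace ℝ (Fin 2) :=
  (WithLp.equiv 2 (Fin 2 → ℝ)).symm ![Real.cos t, Real.sin t]

/-- The `i`-th crease ray `R i = {r • (cos θ_i, sin θ_i) : r ≥ 0}`. -/
noncomputable def creaseRay (α : ℕ → ℝ) (i : ℕ) : Set (EuclideanSpace ℝ (Fin 2)) :=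
  {p | ∃ r : ℝ, 0 ≤ r ∧ p = r • dirVec (cumAngle α i)}

/-- The `i`-th closed sector `S i = {r • (cos t, sin t) : r ≥ 0, θ_{i-1} ≤ t ≤ θ_i}`. -/
noncomputable def sector (α : ℕ → ℝ) (i : ℕ) : Set (EuclideanSpace ℝ (Fin 2)) :=
  {p | ∃ r t : ℝ, 0 ≤ r ∧ cumAngle α (i - 1) ≤ t ∧ t ≤ cumAngle α i ∧ p = r • dirVec t}

namespace Kawasaki

open Complex Filter Set

/-! ### Complex-plane versions of the basic objects -/

noncomputable def ex (t : ℝ) : ℂ := Complex.exp (t * Complex.I)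

lemma abs_ex (t : ℝ) : ‖ex t‖ = 1 := Complex.norm_exp_ofReal_mul_I t

lemma ex_ne_zero (t : ℝ) : ex t ≠ 0 := Complex.exp_ne_zero _

lemma ex_add (s t : ℝ) : ex (s + t) = ex s * ex t := by
  rw [ex, ex, ex, ← Complex.exp_add]; push_cast; ring_nf

lemma conj_ex (t : ℝ) : (starRingEnd ℂ) (ex t) = ex (-t) := by
  rw [ex, ex, ← Complex.exp_conj]
  simp only [map_mul, Complex.conj_I, Complex.conj_ofReal]
  push_cast; ring_nf

lemma ex_re (t : ℝ) : (ex t).re = Real.cos t := by simp [ex, Complex.exp_ofReal_mul_I_re]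

lemma ex_im (t : ℝ) : (ex t).im = Real.sin t := by simp [ex, Complex.exp_ofReal_mul_I_im]

lemma ex_two_pi : ex (2 * π) = 1 := by rw [ex]; push_cast; exact Complex.exp_two_pi_mul_I

lemma ex_mul_conj (t : ℝ) : ex t * (starRingEnd ℂ) (ex t) = 1 := by
  rw [conj_ex, ← ex_add]; simp [ex]

/-- The `i`-th closed sector, in the complex plane. -/
def cSector (α : ℕ → ℝ) (i : ℕ) : Set ℂ :=
  {z | ∃ r t : ℝ, 0 ≤ r ∧ cumAngle α (i - 1) ≤ t ∧ t ≤ cumAngle α i ∧ z = r * ex t}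

/-- The `i`-th crease ray, in the complex plane. -/
def cRay (α : ℕ → ℝ) (i : ℕ) : Set ℂ :=
  {z | ∃ r : ℝ, 0 ≤ r ∧ z = r * ex (cumAngle α i)}

noncomputable def eqC : ℂ ≃ₗᵢ[ℝ] EuclideanSpace ℝ (Fin 2) :=
  Complex.isometryOfOrthonormal (EuclideanSpace.basisFun (Fin 2) ℝ)

lemma eqC_ex (t : ℝ) : eqC (ex t) = dirVec t := by
  rw [eqC, Complex.isometryOfOrthonormal_apply]
  ext j
  fin_cases j <;>
    simp [dirVec, ex, Complex.exp_ofReal_mul_I_re, Complex.exp_ofReal_mul_I_im,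
      EuclideanSpace.basisFun_apply, EuclideanSpace.single_apply]

lemma eqC_smul_ex (r t : ℝ) : eqC ((r : ℂ) * ex t) = r • dirVec t := by
  rw [← eqC_ex t, ← eqC.map_smul, Complex.real_smul]

lemma mem_sector_iff (α : ℕ → ℝ) (i : ℕ) (z : ℂ) : eqC z ∈ sector α i ↔ z ∈ cSector α i := by
  constructor
  · rintro ⟨r, t, hr, h1, h2, hz⟩
    exact ⟨r, t, hr, h1, h2, eqC.injective (by rw [hz, eqC_smul_ex])⟩
  · rintro ⟨r, t, hr, h1, h2, hz⟩
    exact ⟨r, t, hr, h1, h2, by rw [hz, eqC_smul_ex]⟩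

lemma mem_ray_iff (α : ℕ → ℝ) (i : ℕ) (z : ℂ) : eqC z ∈ creaseRay α i ↔ z ∈ cRay α i := by
  constructor
  · rintro ⟨r, hr, hz⟩
    exact ⟨r, hr, eqC.injective (by rw [hz, eqC_smul_ex])⟩
  · rintro ⟨r, hr, hz⟩
    exact ⟨r, hr, by rw [hz, eqC_smul_ex]⟩

section Angles
variable {k : ℕ} {α : ℕ → ℝ}

lemma cumAngle_zero : cumAngle α 0 = 0 := by simp [cumAngle]

lemma cumAngle_succ (i : ℕ) : cumAngle α (i + 1) = cumAngle α i + α i := by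
  simp [cumAngle, Finset.sum_range_succ]

lemma cumAngle_lt (hpos : ∀ i < k, 0 < α i) {i j : ℕ} (hij : i < j) (hjk : j ≤ k) :
    cumAngle α i < cumAngle α j := by
  have : ∀ m ∈ Finset.Ico i j, 0 < α m := fun m hm => by
    have := Finset.mem_Ico.mp hm; exact hpos m (lt_of_lt_of_le this.2 hjk)
  have hsum : 0 < ∑ m ∈ Finset.Ico i j, α m :=
    Finset.sum_pos this ⟨i, Finset.mem_Ico.mpr ⟨le_refl _, hij⟩⟩
  have : cumAngle α j = cumAngle α i + ∑ m ∈ Finset.Ico i j, α m := by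
    rw [cumAngle, cumAngle, ← Finset.sum_range_add_sum_Ico _ (le_of_lt hij)]
  linarith

lemma cumAngle_mono (hpos : ∀ i < k, 0 < α i) {i j : ℕ} (hij : i ≤ j) (hjk : j ≤ k) :
    cumAngle α i ≤ cumAngle α j := by
  rcases eq_or_lt_of_le hij with h | h
  · subst h; exact le_refl _
  · exact le_of_lt (cumAngle_lt hpos h hjk)

/-- partial alternating sums of cumulative angles -/
lemma altSum_cumAngle (α : ℕ → ℝ) (n : ℕ) :
    ∑ j ∈ Finset.range n, (-1 : ℝ) ^ j * cumAngle α (j + 1) =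
      (∑ l ∈ Finset.range n, if Even l then α l else 0) -
        if Even n then cumAngle α n else 0 := by
  induction n with
  | zero => simp [cumAngle_zero]
  | succ n ih =>
    rw [Finset.sum_range_succ, ih, Finset.sum_range_succ]
    rcases Nat.even_or_odd n with he | ho
    · have h1 : ¬ Even (n + 1) := by simp [Nat.even_add_one, he]
      rw [if_pos he, if_pos he, if_neg h1, he.neg_one_pow, cumAngle_succ]
      ring
    · have h1 : Even (n + 1) := Odd.add_one ho
      have h2 : ¬ Even n := Nat.not_even_iff_odd.mpr ho
      rw [if_neg h2, if_neg h2, if_pos h1, ho.neg_one_pow]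
      ring

/-- The alternating sum of the `α`'s in terms of the even-indexed sum. -/
lemma altSum_eq (α : ℕ → ℝ) (k : ℕ) :
    ∑ l ∈ Finset.range k, (-1 : ℝ) ^ l * α l =
      2 * (∑ l ∈ Finset.range k, if Even l then α l else 0) - ∑ l ∈ Finset.range k, α l := by
  rw [Finset.mul_sum, ← Finset.sum_sub_distrib]
  apply Finset.sum_congr rfl
  intro l _
  rcases Nat.even_or_odd l with he | ho
  · rw [if_pos he, he.neg_one_pow]; ring
  · rw [if_neg (Nat.not_even_iff_odd.mpr ho), ho.neg_one_pow]; ring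

end Angles

section Algebra

local notation "conj'" => starRingEnd ℂ

lemma eq_of_inner {p q h z : ℂ} (hpq : (p * conj' q).im ≠ 0)
    (h1 : (h * conj' p).re = (z * conj' p).re) (h2 : (h * conj' q).re = (z * conj' q).re) :
    h = z := by
  have e1 : (h.re - z.re) * p.re + (h.im - z.im) * p.im = 0 := by
    have := sub_eq_zero.mpr h1
    simp only [Complex.mul_re, Complex.conj_re, Complex.conj_im] at this
    linarith
  have e2 : (h.re - z.re) * q.re + (h.im - z.im) * q.im = 0 := by
    have := sub_eq_zero.mpr h2
    simp only [Complex.mul_re, Complex.conj_re, Complex.conj_im] at this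
    linarith
  have hd : p.im * q.re - p.re * q.im ≠ 0 := by
    intro h'
    apply hpq
    simp only [Complex.mul_im, Complex.conj_re, Complex.conj_im]
    linarith
  have hre : h.re = z.re := by
    have : (h.re - z.re) * (p.im * q.re - p.re * q.im) = 0 := by linear_combination (-q.im) * e1 + p.im * e2
    rcases mul_eq_zero.mp this with h' | h'
    · linarith
    · exact absurd h' hd
  have him : h.im = z.im := by
    have : (h.im - z.im) * (p.im * q.re - p.re * q.im) = 0 := by linear_combination q.re * e1 + (-p.re) * e2
    rcases mul_eq_zero.mp this with h' | h'
    · linarith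
    · exact absurd h' hd
  exact Complex.ext hre him

lemma re_or_conj {A B : ℂ} (habs : ‖A‖ = ‖B‖) (hre : A.re = B.re) :
    A = B ∨ A = conj' B := by
  have hsq : Complex.normSq A = Complex.normSq B := by
    rw [← Complex.sq_norm, ← Complex.sq_norm, habs]
  simp only [Complex.normSq_apply] at hsq
  have : A.im ^ 2 = B.im ^ 2 := by rw [hre] at hsq; nlinarith [hsq]
  rcases sq_eq_sq_iff_eq_or_eq_neg.mp this with h | h
  · exact Or.inl (Complex.ext hre h)
  · exact Or.inr (Complex.ext (by simp [hre]) (by simp [h]))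

end Algebra



section Extension
local notation "conj'" => starRingEnd ℂ

lemma normSq_sub' (z y : ℂ) : Complex.normSq (z - y) =
    Complex.normSq z - 2 * (z * conj' y).re + Complex.normSq y := by
  simp only [Complex.normSq_apply, Complex.mul_re, Complex.conj_re, Complex.conj_im,
    Complex.sub_re, Complex.sub_im]
  ring

lemma extend {F : ℂ → ℂ} {S : Set ℂ} (h0 : (0:ℂ) ∈ S) {a b : ℝ}
    (hab : a < b) (hba : b - a ≤ π / 2)
    (hray : ∀ t, a ≤ t → t ≤ b → ex t ∈ S)
    (hiso : ∀ x ∈ S, ∀ y ∈ S, dist (F x) (F y) = dist x y) :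
    ∃ u : ℂ, ‖u‖ = 1 ∧
      ((∀ z ∈ S, F z = F 0 + u * z) ∨ (∀ z ∈ S, F z = F 0 + u * conj' z)) := by
  set G : ℂ → ℂ := fun z => F z - F 0 with hG
  have habs : ∀ z ∈ S, ‖G z‖ = ‖z‖ := by
    intro z hz
    have := hiso z hz 0 h0
    simpa [Complex.dist_eq, hG] using this
  have hinner : ∀ z ∈ S, ∀ y ∈ S, (G z * conj' (G y)).re = (z * conj' y).re := by
    intro z hz y hy
    have h1 : ‖G z - G y‖ = ‖z - y‖ := by
      have := hiso z hz y hy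
      simpa [Complex.dist_eq, hG, sub_sub_sub_cancel_right] using this
    have h2 : Complex.normSq (G z - G y) = Complex.normSq (z - y) := by
      rw [← Complex.sq_norm, ← Complex.sq_norm, h1]
    have h3 : Complex.normSq (G z) = Complex.normSq z := by
      rw [← Complex.sq_norm, ← Complex.sq_norm, habs z hz]
    have h4 : Complex.normSq (G y) = Complex.normSq y := by
      rw [← Complex.sq_norm, ← Complex.sq_norm, habs y hy]
    rw [normSq_sub' (G z) (G y), normSq_sub' z y] at h2
    linarith
  have hpair : ∀ z ∈ S, ∀ y ∈ S, G z * conj' (G y) = z * conj' y ∨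
      G z * conj' (G y) = conj' (z * conj' y) := by
    intro z hz y hy
    apply re_or_conj
    · rw [norm_mul, Complex.norm_conj, norm_mul, Complex.norm_conj, habs z hz, habs y hy]
    · simpa using hinner z hz y hy
  set p := ex a with hp
  set q := ex b with hq
  have hpS : p ∈ S := hray a le_rfl (le_of_lt hab)
  have hqS : q ∈ S := hray b (le_of_lt hab) le_rfl
  have hpq : (p * conj' q).im ≠ 0 := by
    rw [hp, hq, conj_ex, ← ex_add, ex_im]
    have h1 : 0 < Real.sin (b - a) :=
      Real.sin_pos_of_pos_of_lt_pi (by linarith) (by linarith [Real.pi_gt_three])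
    rw [show a + -b = -(b-a) by ring, Real.sin_neg]
    linarith
  have pid : p * conj' p = 1 := ex_mul_conj a
  have habsp : ‖G p‖ = 1 := by rw [habs p hpS, hp]; exact abs_ex a
  have gpid : G p * conj' (G p) = 1 := by
    rw [Complex.mul_conj, ← Complex.sq_norm, habsp]; norm_num
  have hGz : ∀ z, G z = F z - F 0 := fun z => rfl
  rcases hpair p hpS q hqS with case1 | case2
  · -- rotation case
    set u := G p * conj' p with hu
    have habsu : ‖u‖ = 1 := by
      rw [hu, norm_mul, Complex.norm_conj, habsp, hp, abs_ex]; norm_num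
    have uid : u * conj' u = 1 := by
      rw [Complex.mul_conj, ← Complex.sq_norm, habsu]; norm_num
    refine ⟨u, habsu, Or.inl ?_⟩
    have hGq : G q = u * q := by
      have hc : conj' (G q) = conj' (G p) * p * conj' q := by
        linear_combination conj' (G p) * case1 - conj' (G q) * gpid
      have h2 := congrArg conj' hc
      simp only [map_mul, Complex.conj_conj] at h2
      rw [hu]; linear_combination h2
    intro z hz
    have key : conj' u * G z = z := by
      apply eq_of_inner hpq
      · have e : conj' u * G z * conj' p = G z * conj' (G p) := by
          rw [hu]; simp only [map_mul, Complex.conj_conj]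
          linear_combination G z * conj' (G p) * pid
        rw [e]; exact hinner z hz p hpS
      · have e : conj' u * G z * conj' q = G z * conj' (G q) := by
          rw [hGq]; simp only [map_mul]; ring
        rw [e]; exact hinner z hz q hqS
    have hfin : G z = u * z := by linear_combination u * key - G z * uid
    rw [hGz] at hfin
    linear_combination hfin
  · -- reflection case
    set u := G p * p with hu
    have habsu : ‖u‖ = 1 := by
      rw [hu, norm_mul, habsp, hp, abs_ex]; norm_num
    have uid : u * conj' u = 1 := by
      rw [Complex.mul_conj, ← Complex.sq_norm, habsu]; norm_num
    refine ⟨u, habsu, Or.inr ?_⟩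
    simp only [map_mul, Complex.conj_conj] at case2
    have hGq : G q = u * conj' q := by
      have hc : conj' (G q) = conj' (G p) * conj' p * q := by
        linear_combination conj' (G p) * case2 - conj' (G q) * gpid
      have h2 := congrArg conj' hc
      simp only [map_mul, Complex.conj_conj] at h2
      rw [hu]; linear_combination h2
    intro z hz
    have key : conj' (G z) * u = z := by
      apply eq_of_inner hpq
      · have e : conj' (G z) * u * conj' p = conj' (G z * conj' (G p)) := by
          rw [hu]; simp only [map_mul, Complex.conj_conj]
          linear_combination conj' (G z) * (G p) * pid
        rw [e, Complex.conj_re]; exact hinner z hz p hpS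
      · have e : conj' (G z) * u * conj' q = conj' (G z * conj' (G q)) := by
          rw [hGq]; simp only [map_mul, Complex.conj_conj]; ring
        rw [e, Complex.conj_re]; exact hinner z hz q hqS
    have key' := congrArg conj' key
    simp only [map_mul, Complex.conj_conj] at key'
    have hfin : G z = u * conj' z := by linear_combination u * key' - G z * uid
    rw [hGz] at hfin
    linear_combination hfin

end Extension

section Geometry
local notation "conj'" => starRingEnd ℂ

lemma polar_add {r : ℝ} (t : ℝ) (hr : 0 < r) :
    (r : ℂ) + (t : ℂ) * Complex.I =
      (Real.sqrt (r ^ 2 + t ^ 2) : ℂ) * ex (Real.arctan (t / r)) := by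
  have hs : Real.sqrt (1 + (t / r) ^ 2) = Real.sqrt (r ^ 2 + t ^ 2) / r := by
    rw [show 1 + (t / r) ^ 2 = (r ^ 2 + t ^ 2) / r ^ 2 by field_simp,
      Real.sqrt_div (by positivity), Real.sqrt_sq hr.le]
  have hpos : 0 < Real.sqrt (r ^ 2 + t ^ 2) := Real.sqrt_pos.mpr (by positivity)
  apply Complex.ext
  · simp only [Complex.add_re, Complex.ofReal_re, Complex.mul_re, Complex.ofReal_im,
      Complex.mul_im, Complex.I_re, Complex.I_im, ex_re, ex_im]
    rw [Real.cos_arctan, hs]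
    field_simp
    ring
  · simp only [Complex.add_im, Complex.ofReal_re, Complex.ofReal_im, Complex.mul_re,
      Complex.mul_im, Complex.I_re, Complex.I_im, ex_re, ex_im]
    rw [Real.sin_arctan, hs]
    field_simp
    ring

lemma tangent_decomp (θ : ℝ) {r : ℝ} (c : ℝ) (hr : 0 < r) :
    (r : ℂ) * ex θ + c • (Complex.I * ((r : ℂ) * ex θ)) =
      (Real.sqrt (r ^ 2 + (c * r) ^ 2) : ℂ) * ex (θ + Real.arctan c) := by
  have h1 := polar_add (c * r) hr
  have h2 : c * r / r = c := by field_simp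
  rw [h2] at h1
  rw [ex_add]
  have : (c : ℝ) • (Complex.I * ((r : ℂ) * ex θ)) = ((c * r : ℝ) : ℂ) * Complex.I * ex θ := by
    rw [Complex.real_smul]; push_cast; ring
  rw [this]
  linear_combination ex θ * h1

lemma decomp (θ : ℝ) {z : ℂ} (hz : z ≠ 0) :
    z = (‖z‖ : ℂ) * ex (θ + Complex.arg (z * ex (-θ))) := by
  have h1 : (‖z * ex (-θ)‖ : ℂ) * ex (Complex.arg (z * ex (-θ))) = z * ex (-θ) :=
    Complex.norm_mul_exp_arg_mul_I _
  have h2 : ‖z * ex (-θ)‖ = ‖z‖ := by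
    rw [norm_mul, abs_ex, mul_one]
  rw [h2] at h1
  have h3 : ex (-θ) * ex θ = 1 := by rw [← ex_add]; simp [ex]
  rw [ex_add]
  calc z = z * (ex (-θ) * ex θ) := by rw [h3, mul_one]
    _ = (z * ex (-θ)) * ex θ := by ring
    _ = ((‖z‖ : ℂ) * ex (Complex.arg (z * ex (-θ)))) * ex θ := by rw [h1]
    _ = (‖z‖ : ℂ) * (ex θ * ex (Complex.arg (z * ex (-θ)))) := by ring

noncomputable def rotCLM (u : ℂ) : ℂ →L[ℝ] ℂ :=
  ((ContinuousLinearMap.mul ℂ ℂ) u).restrictScalars ℝ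

noncomputable def reflCLM (u : ℂ) : ℂ →L[ℝ] ℂ :=
  (rotCLM u).comp (Complex.conjCLE : ℂ ≃L[ℝ] ℂ).toContinuousLinearMap

@[simp] lemma rotCLM_apply (u z : ℂ) : rotCLM u z = u * z := rfl

@[simp] lemma reflCLM_apply (u z : ℂ) : reflCLM u z = u * conj' z := rfl

lemma deriv_dir {F : ℂ → ℂ} {x : ℂ} {L : ℂ →L[ℝ] ℂ} (hd : HasFDerivAt F L x)
    (v : ℂ) (A : ℂ →L[ℝ] ℂ)
    (hev : ∀ᶠ c in nhdsWithin (0:ℝ) (Set.Ioi 0), F (x + c • v) = A (x + c • v))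
    (hx : F x = A x) : L v = A v := by
  have hc : Filter.Tendsto (fun n : ℕ => ‖(n : ℝ)‖) Filter.atTop Filter.atTop := by
    simp only [Real.norm_natCast]
    exact tendsto_natCast_atTop_atTop
  have hlim := hd.lim v hc
  have hseq : Filter.Tendsto (fun n : ℕ => ((n : ℝ))⁻¹) Filter.atTop (nhdsWithin (0:ℝ) (Set.Ioi 0)) := by
    apply tendsto_nhdsWithin_of_tendsto_nhds_of_eventually_within
    · exact tendsto_inv_atTop_nhds_zero_nat
    · filter_upwards [Filter.eventually_gt_atTop 0] with n hn
      have : (0:ℝ) < (n:ℝ) := by exact_mod_cast hn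
      exact Set.mem_Ioi.mpr (by positivity)
  have hev2 := hseq.eventually hev
  have heq : ∀ᶠ n : ℕ in Filter.atTop,
      (n : ℝ) • (F (x + ((n : ℝ))⁻¹ • v) - F x) = A v := by
    filter_upwards [hev2, Filter.eventually_ge_atTop 1] with n h hn
    rw [h, hx, map_add, map_smul, add_sub_cancel_left, smul_smul, mul_inv_cancel₀, one_smul]
    exact Nat.cast_ne_zero.mpr (by omega)
  exact tendsto_nhds_unique hlim
    (Filter.Tendsto.congr' (Filter.EventuallyEq.symm heq) tendsto_const_nhds)

lemma rot_refl_sep {u u' x : ℂ} (hu : u ≠ 0) (hx : x ≠ 0)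
    (hagree : u * x = u' * conj' x) :
    u * (Complex.I * x) ≠ u' * conj' (Complex.I * x) := by
  intro h
  rw [map_mul, Complex.conj_I] at h
  have h2 : (2 : ℂ) * Complex.I * (u * x) = 0 := by linear_combination h + Complex.I * hagree
  simp only [mul_eq_zero] at h2
  rcases h2 with (h2 | h2) | h2
  · norm_num at h2
  · exact Complex.I_ne_zero h2
  · rcases h2 with h2 | h2
    · exact hu h2
    · exact hx h2

lemma not_diff {F : ℂ → ℂ} {x : ℂ} (AL AR : ℂ →L[ℝ] ℂ)
    (hL : ∀ᶠ c in nhdsWithin (0:ℝ) (Set.Ioi 0),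
      F (x + c • (-(Complex.I * x))) = AL (x + c • (-(Complex.I * x))))
    (hR : ∀ᶠ c in nhdsWithin (0:ℝ) (Set.Ioi 0),
      F (x + c • (Complex.I * x)) = AR (x + c • (Complex.I * x)))
    (hxL : F x = AL x) (hxR : F x = AR x)
    (hne : AL (Complex.I * x) ≠ AR (Complex.I * x)) :
    ¬ DifferentiableAt ℝ F x := by
  intro hd
  have h1 : fderiv ℝ F x (-(Complex.I * x)) = AL (-(Complex.I * x)) :=
    deriv_dir hd.hasFDerivAt _ AL hL hxL
  have h2 : fderiv ℝ F x (Complex.I * x) = AR (Complex.I * x) :=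
    deriv_dir hd.hasFDerivAt _ AR hR hxR
  rw [map_neg, map_neg, neg_inj] at h1
  exact hne (h1 ▸ h2 ▸ rfl)

end Geometry

section Sectors
variable {k : ℕ} {α : ℕ → ℝ}

lemma cumAngle_nonneg (hpos : ∀ i < k, 0 < α i) {i : ℕ} (hik : i ≤ k) :
    0 ≤ cumAngle α i := by
  have := cumAngle_mono hpos (Nat.zero_le i) hik
  rwa [cumAngle_zero] at this

lemma eventually_sector (hpos : ∀ i < k, 0 < α i)
    (hsum : ∑ i ∈ Finset.range k, α i = 2 * π)
    {i : ℕ} (h1 : 1 ≤ i) (h2 : i ≤ k) {r : ℝ} (hr : 0 < r) :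
    ∀ᶠ z in nhds ((r : ℂ) * ex (cumAngle α i)),
      z ∈ cSector α i ∪ cSector α (if i = k then 1 else i + 1) := by
  have hθk : cumAngle α k = 2 * π := hsum
  have hsub : i - 1 < i := Nat.sub_lt h1 one_pos
  have hwL : 0 < cumAngle α i - cumAngle α (i - 1) :=
    sub_pos.mpr (cumAngle_lt hpos hsub h2)
  have hwR : 0 < (if i = k then cumAngle α 1 else cumAngle α (i + 1) - cumAngle α i) := by
    split_ifs with hik
    · have := cumAngle_lt hpos (show 0 < 1 by norm_num) (le_trans h1 h2)
      rwa [cumAngle_zero] at this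
    · exact sub_pos.mpr (cumAngle_lt hpos (Nat.lt_succ_self i) (Nat.succ_le_of_lt (lt_of_le_of_ne h2 hik)))
  set θi := cumAngle α i with hθi
  set ε := min (cumAngle α i - cumAngle α (i - 1))
    (if i = k then cumAngle α 1 else cumAngle α (i + 1) - cumAngle α i) with hε
  have hεpos : 0 < ε := lt_min hwL hwR
  set x0 : ℂ := (r : ℂ) * ex θi with hx0def
  have hx0 : x0 ≠ 0 :=
    mul_ne_zero (Complex.ofReal_ne_zero.mpr hr.ne') (ex_ne_zero _)
  have hxe : x0 * ex (-θi) = (r : ℂ) := by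
    rw [hx0def, mul_assoc, ← ex_add]; simp [ex]
  have harg : ContinuousAt Complex.arg ((r : ℂ)) := by
    apply Complex.continuousAt_arg
    rw [Complex.mem_slitPlane_iff]
    exact Or.inl (by simpa using hr)
  have hga : ContinuousAt (fun z : ℂ => Complex.arg (z * ex (-θi))) x0 := by
    have h2' : ContinuousAt (fun z : ℂ => z * ex (-θi)) x0 :=
      (continuous_mul_right _).continuousAt
    exact ContinuousAt.comp (hxe ▸ harg) h2'
  have hg0 : Complex.arg (x0 * ex (-θi)) = 0 := by
    rw [hxe]; exact Complex.arg_ofReal_of_nonneg hr.le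
  rw [ContinuousAt, hg0] at hga
  have hev1 : ∀ᶠ z in nhds x0, Complex.arg (z * ex (-θi)) ∈ Set.Ioo (-ε) ε :=
    hga (Ioo_mem_nhds (by linarith) hεpos)
  have hev2 : ∀ᶠ z in nhds x0, z ≠ 0 := eventually_ne_nhds hx0
  filter_upwards [hev1, hev2] with z hz1 hz2
  have hd := decomp θi hz2
  obtain ⟨hzl, hzu⟩ := hz1
  rcases le_or_gt (Complex.arg (z * ex (-θi))) 0 with hg | hg
  · left
    refine ⟨‖z‖, θi + Complex.arg (z * ex (-θi)), norm_nonneg z, ?_, ?_, hd⟩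
    · have : ε ≤ cumAngle α i - cumAngle α (i - 1) := min_le_left _ _
      rw [hθi]; linarith
    · rw [hθi]; linarith
  · right
    by_cases hik : i = k
    · rw [if_pos hik]
      have hε1 : ε ≤ cumAngle α 1 := by
        rw [hε, if_pos hik] at *
        exact le_trans (min_le_right _ _) (le_refl _)
      refine ⟨‖z‖, Complex.arg (z * ex (-θi)), norm_nonneg z, ?_, ?_, ?_⟩
      · simpa [cumAngle_zero] using hg.le
      · linarith
      · have h2pi : θi = 2 * π := by rw [hθi, hik, hθk]
        calc z = (‖z‖ : ℂ) * ex (θi + Complex.arg (z * ex (-θi))) := hd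
          _ = (‖z‖ : ℂ) * ex (Complex.arg (z * ex (-θi))) := by
              rw [h2pi, ex_add, ex_two_pi, one_mul]
    · rw [if_neg hik]
      have hε1 : ε ≤ cumAngle α (i + 1) - cumAngle α i := by
        rw [hε, if_neg hik] at *
        exact min_le_right _ _
      refine ⟨‖z‖, θi + Complex.arg (z * ex (-θi)), norm_nonneg z, ?_, ?_, hd⟩
      · simp only [Nat.add_sub_cancel]; linarith
      · rw [hθi]; linarith

end Sectors

section Forward
local notation "conj'" => starRingEnd ℂ

set_option maxHeartbeats 1000000 in
lemma forward {k : ℕ} (hk : 1 ≤ k) {α : ℕ → ℝ} (hpos : ∀ i < k, 0 < α i)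
    (hsum : ∑ i ∈ Finset.range k, α i = 2 * π)
    {F : ℂ → ℂ}
    (hisoS : ∀ i, 1 ≤ i → i ≤ k → ∀ x ∈ cSector α i, ∀ y ∈ cSector α i,
      dist (F x) (F y) = dist x y)
    (hnd : ∀ i, 1 ≤ i → i ≤ k → ∀ x ∈ cRay α i, x ≠ 0 → ¬ DifferentiableAt ℝ F x) :
    Even k ∧ ∑ i ∈ Finset.range k, (-1 : ℝ) ^ i * α i = 0 := by
  classical
  -- Step A : extension on each sector
  have hext : ∀ i : ℕ, ∃ u : ℂ, 1 ≤ i → i ≤ k →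
      ‖u‖ = 1 ∧
        ((∀ z ∈ cSector α i, F z = F 0 + u * z) ∨
         (∀ z ∈ cSector α i, F z = F 0 + u * conj' z)) := by
    intro i
    by_cases h : 1 ≤ i ∧ i ≤ k
    · obtain ⟨h1, h2⟩ := h
      have hii : cumAngle α (i - 1) < cumAngle α i :=
        cumAngle_lt hpos (Nat.sub_lt h1 one_pos) h2
      have hab : cumAngle α (i - 1) < min (cumAngle α i) (cumAngle α (i - 1) + π / 2) :=
        lt_min hii (by linarith [Real.pi_pos])
      have hba : min (cumAngle α i) (cumAngle α (i - 1) + π / 2) - cumAngle α (i - 1) ≤ π / 2 := by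
        have := min_le_right (cumAngle α i) (cumAngle α (i - 1) + π / 2); linarith
      have h0 : (0 : ℂ) ∈ cSector α i :=
        ⟨0, cumAngle α (i - 1), le_refl _, le_refl _, hii.le, by simp⟩
      have hray : ∀ t, cumAngle α (i - 1) ≤ t →
          t ≤ min (cumAngle α i) (cumAngle α (i - 1) + π / 2) → ex t ∈ cSector α i := by
        intro t ht1 ht2
        exact ⟨1, t, zero_le_one, ht1, le_trans ht2 (min_le_left _ _), by
          rw [Complex.ofReal_one, one_mul]⟩
      obtain ⟨u, hu1, hu2⟩ := extend h0 hab hba hray (hisoS i h1 h2)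
      exact ⟨u, fun _ _ => ⟨hu1, hu2⟩⟩
    · exact ⟨1, fun h1 h2 => absurd ⟨h1, h2⟩ h⟩
  choose u hu using hext
  set R : ℕ → Prop := fun i => ∀ z ∈ cSector α i, F z = F 0 + u i * z with hRdef
  -- basic memberships
  have hxne : ∀ i : ℕ, ((1:ℝ) : ℂ) * ex (cumAngle α i) ≠ 0 := by
    intro i; simp [ex_ne_zero]
  have hxray : ∀ i : ℕ, ((1:ℝ) : ℂ) * ex (cumAngle α i) ∈ cRay α i := fun i =>
    ⟨1, zero_le_one, rfl⟩
  have hES : ∀ i, 1 ≤ i → i ≤ k → ex (cumAngle α i) ∈ cSector α i := by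
    intro i h1 h2
    exact ⟨1, cumAngle α i, zero_le_one,
      (cumAngle_mono hpos (Nat.sub_le i 1) h2), le_refl _, by rw [Complex.ofReal_one, one_mul]⟩
  have hESn : ∀ i, 1 ≤ i → i ≤ k →
      ex (cumAngle α i) ∈ cSector α (if i = k then 1 else i + 1) := by
    intro i h1 h2
    split_ifs with hik
    · refine ⟨1, 0, zero_le_one, ?_, ?_, ?_⟩
      · rw [show (1:ℕ) - 1 = 0 from rfl, cumAngle_zero]
      · exact cumAngle_nonneg hpos (le_trans h1 h2)
      · have hck : cumAngle α k = 2 * π := hsum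
        rw [hik, hck, ex_two_pi]; simp [ex]
    · have hik' : i + 1 ≤ k := Nat.succ_le_of_lt (lt_of_le_of_ne h2 hik)
      exact ⟨1, cumAngle α i, zero_le_one, le_refl _,
        cumAngle_mono hpos (Nat.le_succ i) hik',
        by rw [Complex.ofReal_one, one_mul]⟩
  -- Step C : no two adjacent sectors with the same representation
  have same : ∀ i, 1 ≤ i → i ≤ k → ∀ A : ℂ →L[ℝ] ℂ,
      (∀ z ∈ cSector α i, F z = F 0 + A z) →
      (∀ z ∈ cSector α (if i = k then 1 else i + 1), F z = F 0 + A z) → False := by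
    intro i h1 h2 A hAi hAj
    have hev : F =ᶠ[nhds (((1:ℝ) : ℂ) * ex (cumAngle α i))] fun z => F 0 + A z := by
      filter_upwards [eventually_sector hpos hsum h1 h2 one_pos] with z hz
      rcases hz with hz | hz
      · exact hAi z hz
      · exact hAj z hz
    have hdA : DifferentiableAt ℝ (fun z : ℂ => F 0 + A z) (((1:ℝ) : ℂ) * ex (cumAngle α i)) :=
      (differentiableAt_const _).add A.differentiableAt
    exact hnd i h1 h2 _ (hxray i) (hxne i) (hdA.congr_of_eventuallyEq hev)
  have balt : ∀ i, 1 ≤ i → i ≤ k → (R (if i = k then 1 else i + 1) ↔ ¬ R i) := by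
    intro i h1 h2
    set j := if i = k then 1 else i + 1 with hj
    have hj1 : 1 ≤ j := by rw [hj]; split_ifs <;> omega
    have hj2 : j ≤ k := by rw [hj]; split_ifs <;> omega
    have hEj : ex (cumAngle α i) ∈ cSector α j := hESn i h1 h2
    have hEi : ex (cumAngle α i) ∈ cSector α i := hES i h1 h2
    constructor
    · intro hRj hRi
      -- both rotations
      have : u i = u j := by
        have e1 := hRi _ hEi
        have e2 := hRj _ hEj
        rw [e1] at e2
        exact mul_right_cancel₀ (ex_ne_zero _) (add_left_cancel e2)
      apply same i h1 h2 (rotCLM (u i)) (fun z hz => hRi z hz)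
        (fun z hz => by rw [this]; exact hRj z hz)
    · intro hRi
      by_contra hRj
      have hfi : ∀ z ∈ cSector α i, F z = F 0 + u i * conj' z :=
        (hu i h1 h2).2.resolve_left hRi
      have hfj : ∀ z ∈ cSector α j, F z = F 0 + u j * conj' z :=
        (hu j hj1 hj2).2.resolve_left hRj
      have : u i = u j := by
        have e1 := hfi _ hEi
        have e2 := hfj _ hEj
        rw [e1] at e2
        have e3 : u i * conj' (ex (cumAngle α i)) = u j * conj' (ex (cumAngle α i)) := by
          exact add_left_cancel e2
        exact mul_right_cancel₀ (by simp [conj_ex, ex_ne_zero]) e3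
      apply same i h1 h2 (reflCLM (u i)) (fun z hz => hfi z hz)
        (fun z hz => by rw [this]; exact hfj z hz)

  -- Step: parity alternation
  have hpar : ∀ m, m + 1 ≤ k → (R (m + 1) ↔ (Even m ↔ R 1)) := by
    intro m
    induction m with
    | zero => intro _; simp
    | succ n ih =>
      intro hm
      have hn : n + 1 ≤ k := by omega
      have hne : ¬ (n + 1 = k) := by omega
      have hb := balt (n + 1) (by omega) hn
      rw [if_neg hne] at hb
      have hprev := ih hn
      rw [hb, hprev, Nat.even_add_one]
      tauto
  have heven : Even k := by
    by_contra hodd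
    have hkodd : Odd k := Nat.not_even_iff_odd.mp hodd
    have hb := balt k hk (le_refl k)
    rw [if_pos rfl] at hb
    have hk1 : (k - 1) + 1 = k := Nat.succ_pred_eq_of_pos hk
    have hp := hpar (k - 1) (by omega)
    rw [hk1] at hp
    have hekm : Even (k - 1) := Nat.Odd.sub_odd hkodd odd_one
    tauto
  have hk1 : (k - 1) + 1 = k := Nat.succ_pred_eq_of_pos hk
  have hk2 : 2 ≤ k := by
    rcases heven with ⟨m, hm⟩; omega
  -- Step: the relation between consecutive coefficients
  have hrel : ∀ i, 1 ≤ i → i + 1 ≤ k →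
      u (i + 1) = u i * ex ((if R i then 1 else -1) * (2 * cumAngle α i)) := by
    intro i h1 h2
    have hne : ¬ (i = k) := by omega
    have hb := balt i h1 (by omega)
    rw [if_neg hne] at hb
    have hEi := hES i h1 (by omega)
    have hEj : ex (cumAngle α i) ∈ cSector α (i + 1) := by
      have := hESn i h1 (by omega); rwa [if_neg hne] at this
    have hexid : ex (-(cumAngle α i)) * ex (cumAngle α i) = 1 := by
      rw [← ex_add]; simp [ex]
    by_cases hbi : R i
    · rw [if_pos hbi]
      have hRj : ¬ R (i + 1) := fun h => (hb.mp h) hbi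
      have hfj : ∀ z ∈ cSector α (i + 1), F z = F 0 + u (i + 1) * conj' z :=
        (hu (i + 1) (by omega) h2).2.resolve_left hRj
      have e1 := hbi _ hEi
      have e2 := hfj _ hEj
      rw [e1] at e2
      have e3 : u i * ex (cumAngle α i) = u (i + 1) * conj' (ex (cumAngle α i)) :=
        add_left_cancel e2
      rw [conj_ex] at e3
      have e4 : u (i + 1) = u i * ex (cumAngle α i) * ex (cumAngle α i) := by
        calc u (i + 1) = u (i + 1) * (ex (-(cumAngle α i)) * ex (cumAngle α i)) := by
              rw [hexid, mul_one]
          _ = (u (i + 1) * ex (-(cumAngle α i))) * ex (cumAngle α i) := by ring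
          _ = (u i * ex (cumAngle α i)) * ex (cumAngle α i) := by rw [← e3]
      rw [e4, show (1:ℝ) * (2 * cumAngle α i) = cumAngle α i + cumAngle α i by ring, ex_add]
      ring
    · rw [if_neg hbi]
      have hRj : R (i + 1) := hb.mpr hbi
      have hfi : ∀ z ∈ cSector α i, F z = F 0 + u i * conj' z :=
        (hu i h1 (by omega)).2.resolve_left hbi
      have e1 := hfi _ hEi
      have e2 := hRj _ hEj
      rw [e1] at e2
      have e3 : u i * conj' (ex (cumAngle α i)) = u (i + 1) * ex (cumAngle α i) :=
        add_left_cancel e2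
      rw [conj_ex] at e3
      have hexid2 : ex (cumAngle α i) * ex (-(cumAngle α i)) = 1 := by
        rw [← ex_add]; simp [ex]
      have e4 : u (i + 1) = u i * ex (-(cumAngle α i)) * ex (-(cumAngle α i)) := by
        calc u (i + 1) = u (i + 1) * (ex (cumAngle α i) * ex (-(cumAngle α i))) := by
              rw [hexid2, mul_one]
          _ = (u (i + 1) * ex (cumAngle α i)) * ex (-(cumAngle α i)) := by ring
          _ = (u i * ex (-(cumAngle α i))) * ex (-(cumAngle α i)) := by rw [← e3]
      rw [e4, show (-1:ℝ) * (2 * cumAngle α i) = -(cumAngle α i) + -(cumAngle α i) by ring,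
        ex_add]
      ring
  -- Step: telescoping
  set s1 : ℝ := if R 1 then 1 else -1 with hs1
  have htel : ∀ m, m + 1 ≤ k →
      u (m + 1) = u 1 * ex (s1 * (2 * ∑ j ∈ Finset.range m, (-1:ℝ)^j * cumAngle α (j+1))) := by
    intro m
    induction m with
    | zero =>
      intro _
      norm_num
      simp [ex]
    | succ n ih =>
      intro hm
      have hn : n + 1 ≤ k := by omega
      have hr := hrel (n + 1) (by omega) hm
      have hp := hpar n hn
      have hsgn : (if R (n + 1) then (1:ℝ) else -1) = s1 * (-1)^n := by
        rcases Nat.even_or_odd n with he | ho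
        · rw [he.neg_one_pow]
          by_cases hb1 : R 1
          · rw [hs1, if_pos hb1, if_pos (hp.mpr (iff_of_true he hb1))]; norm_num
          · have hnR : ¬ R (n + 1) := fun h => hb1 ((hp.mp h).mp he)
            rw [hs1, if_neg hb1, if_neg hnR]; norm_num
        · rw [ho.neg_one_pow]
          by_cases hb1 : R 1
          · have hno : ¬ Even n := Nat.not_even_iff_odd.mpr ho
            have hnR : ¬ R (n + 1) := fun h => hno ((hp.mp h).mpr hb1)
            rw [hs1, if_pos hb1, if_neg hnR]; norm_num
          · have hR : R (n + 1) := hp.mpr (iff_of_false (Nat.not_even_iff_odd.mpr ho) hb1)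
            rw [hs1, if_neg hb1, if_pos hR]; norm_num
      rw [hr, hsgn, ih hn, mul_assoc, ← ex_add]
      congr 2
      rw [Finset.sum_range_succ]
      ring
  -- Step: wrap-around gives u 1 = u k
  have hck : cumAngle α k = 2 * π := hsum
  have h1S : (1:ℂ) ∈ cSector α 1 := by
    refine ⟨1, 0, zero_le_one, ?_, ?_, ?_⟩
    · rw [show (1:ℕ) - 1 = 0 from rfl, cumAngle_zero]
    · exact cumAngle_nonneg hpos hk
    · simp [ex]
  have hkS : (1:ℂ) ∈ cSector α k := by
    refine ⟨1, 2 * π, zero_le_one, ?_, ?_, ?_⟩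
    · rw [← hck]; exact cumAngle_mono hpos (Nat.sub_le k 1) (le_refl k)
    · rw [hck]
    · rw [ex_two_pi]; simp
  have hu1k : u 1 = u k := by
    have hY : ∀ j, 1 ≤ j → j ≤ k → (1:ℂ) ∈ cSector α j → F 1 = F 0 + u j := by
      intro j hj1 hj2 hmem
      rcases (hu j hj1 hj2).2 with hf | hf
      · have := hf _ hmem; simpa using this
      · have := hf _ hmem; simpa using this
    have e1 := hY 1 le_rfl hk h1S
    have e2 := hY k hk le_rfl hkS
    rw [e1] at e2
    exact add_left_cancel e2
  -- Step: conclusion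
  have htelk := htel (k - 1) (by omega)
  rw [hk1, ← hu1k] at htelk
  have hune : u 1 ≠ 0 := by
    intro h
    have := (hu 1 le_rfl hk).1
    rw [h] at this
    simp at this
  have hex1 : ex (s1 * (2 * ∑ j ∈ Finset.range (k-1), (-1:ℝ)^j * cumAngle α (j+1))) = 1 :=
    (mul_left_cancel₀ hune (by rw [mul_one]; exact htelk.symm))
  rw [ex] at hex1
  obtain ⟨n, hn⟩ := Complex.exp_eq_one_iff.mp hex1
  set c : ℝ := s1 * (2 * ∑ j ∈ Finset.range (k-1), (-1:ℝ)^j * cumAngle α (j+1)) with hcdef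
  have hc : c = 2 * π * n := by
    have h2 : (c:ℂ) * Complex.I = ((2 * π * n : ℝ) : ℂ) * Complex.I := by
      push_cast
      push_cast at hn
      linear_combination hn
    have h3 := mul_right_cancel₀ Complex.I_ne_zero h2
    exact_mod_cast h3
  -- arithmetic
  have hTalt := altSum_cumAngle α (k - 1)
  have hkm1odd : ¬ Even (k - 1) := by
    obtain ⟨m, hm⟩ := heven
    rw [Nat.even_iff]
    omega
  rw [if_neg hkm1odd, sub_zero] at hTalt
  have hEkk : (∑ l ∈ Finset.range (k-1), if Even l then α l else 0)
      = ∑ l ∈ Finset.range k, if Even l then α l else 0 := by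
    conv_rhs => rw [← hk1]
    rw [Finset.sum_range_succ, if_neg hkm1odd, add_zero]
  have halt := altSum_eq α k
  rw [hsum] at halt
  have hE_pos : 0 < ∑ l ∈ Finset.range k, if Even l then α l else 0 := by
    apply Finset.sum_pos'
    · intro l hl
      split_ifs with h
      · exact (hpos l (Finset.mem_range.mp hl)).le
      · exact le_refl 0
    · exact ⟨0, Finset.mem_range.mpr (by omega), by
        rw [if_pos Even.zero]; exact hpos 0 (by omega)⟩
  have hE_lt : (∑ l ∈ Finset.range k, if Even l then α l else 0) < 2 * π := by
    rw [← hsum]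
    apply Finset.sum_lt_sum
    · intro l hl
      split_ifs
      · exact le_refl _
      · exact (hpos l (Finset.mem_range.mp hl)).le
    · refine ⟨1, Finset.mem_range.mpr (by omega), ?_⟩
      rw [if_neg Nat.not_even_one]
      exact hpos 1 (by omega)
  set Ek := ∑ l ∈ Finset.range k, if Even l then α l else 0 with hEk
  have hcval : c = s1 * (2 * Ek) := by
    rw [hcdef, hTalt, hEkk]
  refine ⟨heven, ?_⟩
  have hpi := Real.pi_pos
  by_cases hb1 : R 1
  · rw [hs1, if_pos hb1, one_mul] at hcval
    -- 2 Ek = 2πn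
    have h2E : 2 * Ek = 2 * π * n := by rw [← hcval, ← hc]
    have h01 : (0:ℤ) < n := by
      have : (0:ℝ) < (n:ℝ) := by nlinarith
      exact_mod_cast this
    have h02 : (n:ℤ) < 2 := by
      have : (n:ℝ) < 2 := by nlinarith
      exact_mod_cast this
    have : n = 1 := by omega
    rw [this] at h2E
    push_cast at h2E
    rw [halt]
    linarith
  · rw [hs1, if_neg hb1] at hcval
    have h2E : -(2 * Ek) = 2 * π * n := by rw [← hc, hcval]; ring
    have h01 : (n:ℤ) < 0 := by
      have : (n:ℝ) < 0 := by nlinarith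
      exact_mod_cast this
    have h02 : (-2:ℤ) < n := by
      have : (-2:ℝ) < (n:ℝ) := by nlinarith
      exact_mod_cast this
    have : n = -1 := by omega
    rw [this] at h2E
    push_cast at h2E
    rw [halt]
    linarith

end Forward

section Reverse
local notation "conj'" => starRingEnd ℂ

lemma arctan_le_self {c : ℝ} (hc : 0 < c) : Real.arctan c ≤ c := by
  have h1 : 0 < Real.arctan c := by
    have := Real.arctan_strictMono hc
    rwa [Real.arctan_zero] at this
  have h2 := Real.lt_tan h1 (Real.arctan_lt_pi_div_two c)
  rw [Real.tan_arctan] at h2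
  linarith

/-- the argument of `z`, normalised to `[0, 2π)`. -/
noncomputable def myarg (z : ℂ) : ℝ :=
  if Complex.arg z < 0 then Complex.arg z + 2 * π else Complex.arg z

lemma myarg_nonneg (z : ℂ) : 0 ≤ myarg z := by
  rw [myarg]; split_ifs with h
  · have := Complex.neg_pi_lt_arg z; linarith [Real.pi_pos]
  · linarith [not_lt.mp h]

lemma myarg_lt (z : ℂ) : myarg z < 2 * π := by
  rw [myarg]; split_ifs with h
  · linarith
  · have := Complex.arg_le_pi z; linarith [Real.pi_pos]

lemma ex_eq_cos_sin (s : ℝ) : ex s = Complex.cos s + Complex.sin s * Complex.I := by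
  rw [ex]; exact Complex.exp_mul_I _

lemma myarg_eq {r t : ℝ} (hr : 0 < r) (h0 : 0 ≤ t) (h2 : t < 2 * π) :
    myarg ((r:ℂ) * ex t) = t := by
  have harg : Complex.arg ((r:ℂ) * ex t) = Complex.arg (ex t) := Complex.arg_real_mul _ hr
  rcases le_or_gt t π with h | h
  · have hat : Complex.arg (ex t) = t := by
      rw [ex_eq_cos_sin]
      exact Complex.arg_cos_add_sin_mul_I ⟨by linarith [Real.pi_pos], h⟩
  
    rw [myarg, harg, hat, if_neg (not_lt.mpr h0)]
  · have he : ex t = ex (t - 2*π) := by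
      conv_lhs => rw [show t = (t - 2*π) + 2*π by ring]
      rw [ex_add, ex_two_pi, mul_one]
    have hat : Complex.arg (ex (t - 2*π)) = t - 2*π := by
      rw [ex_eq_cos_sin]
      exact Complex.arg_cos_add_sin_mul_I ⟨by linarith, by linarith [Real.pi_pos]⟩
    rw [myarg, harg, he, hat, if_pos (by linarith)]
    ring

lemma myarg_ofReal {r : ℝ} (hr : 0 ≤ r) : myarg ((r:ℂ)) = 0 := by
  rw [myarg, Complex.arg_ofReal_of_nonneg hr, if_neg (lt_irrefl 0)]

lemma self_eq_myarg {z : ℂ} (hz : z ≠ 0) : z = (‖z‖ : ℂ) * ex (myarg z) := by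
  have h1 : (‖z‖ : ℂ) * ex (Complex.arg z) = z := Complex.norm_mul_exp_arg_mul_I z
  rw [myarg]
  split_ifs with h
  · rw [ex_add, ex_two_pi, mul_one]
    exact h1.symm
  · exact h1.symm

/-- index of the sector (0-based) that `z` belongs to -/
noncomputable def sIdx (α : ℕ → ℝ) (k : ℕ) (z : ℂ) : ℕ :=
  Nat.findGreatest (fun s => cumAngle α s ≤ myarg z) (k - 1)

noncomputable def psi (α : ℕ → ℝ) (s : ℕ) : ℝ :=
  2 * ∑ j ∈ Finset.range s, (-1:ℝ)^j * cumAngle α (j+1)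

noncomputable def uu (α : ℕ → ℝ) (s : ℕ) : ℂ := ex (psi α s)

noncomputable def AA (α : ℕ → ℝ) (s : ℕ) (z : ℂ) : ℂ :=
  if Even s then uu α s * z else uu α s * conj' z

noncomputable def FF (α : ℕ → ℝ) (k : ℕ) (z : ℂ) : ℂ := AA α (sIdx α k z) z

variable {k : ℕ} {α : ℕ → ℝ}

lemma sIdx_le (z : ℂ) : sIdx α k z ≤ k - 1 := Nat.findGreatest_le _

lemma sIdx_spec (z : ℂ) : cumAngle α (sIdx α k z) ≤ myarg z := by
  rcases Nat.eq_zero_or_pos (sIdx α k z) with h | h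
  · rw [h, cumAngle_zero]; exact myarg_nonneg z
  · exact Nat.findGreatest_of_ne_zero rfl h.ne'

lemma sIdx_lt (hpos : ∀ i < k, 0 < α i) (hsum : ∑ i ∈ Finset.range k, α i = 2 * π)
    (hk : 1 ≤ k) (z : ℂ) : myarg z < cumAngle α (sIdx α k z + 1) := by
  have hck : cumAngle α k = 2 * π := hsum
  rcases lt_or_ge (sIdx α k z + 1) k with h | h
  · by_contra hle
    push_neg at hle
    have hs := sIdx_le (α := α) (k := k) z
    exact Nat.findGreatest_is_greatest (P := fun s => cumAngle α s ≤ myarg z) (n := k - 1)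
      (Nat.lt_succ_self _)
      (by
        have hfg : sIdx α k z = Nat.findGreatest (fun s => cumAngle α s ≤ myarg z) (k - 1) := rfl
        omega) hle
  · have hidx : sIdx α k z + 1 = k := by
      have := sIdx_le (α := α) (k := k) z; omega
    rw [hidx, hck]
    exact myarg_lt z

end Reverse

section Reverse2
local notation "conj'" => starRingEnd ℂ
variable {k : ℕ} {α : ℕ → ℝ}

lemma abs_uu (s : ℕ) : ‖uu α s‖ = 1 := abs_ex _

lemma uu_ne (s : ℕ) : uu α s ≠ 0 := ex_ne_zero _

lemma uu_succ (s : ℕ) :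
    uu α (s + 1) = uu α s * ex ((-1:ℝ)^s * (2 * cumAngle α (s + 1))) := by
  rw [uu, uu, psi, psi, Finset.sum_range_succ, ← ex_add]
  congr 1
  ring

lemma AA_step (s : ℕ) (r : ℝ) :
    AA α (s + 1) ((r:ℂ) * ex (cumAngle α (s + 1))) =
      AA α s ((r:ℂ) * ex (cumAngle α (s + 1))) := by
  set θ := cumAngle α (s + 1) with hθ
  have hconj : conj' ((r:ℂ) * ex θ) = (r:ℂ) * ex (-θ) := by
    rw [map_mul, Complex.conj_ofReal, conj_ex]
  rcases Nat.even_or_odd s with he | ho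
  · have ho1 : ¬ Even (s + 1) := by simp [Nat.even_add_one, he]
    rw [AA, AA, if_neg ho1, if_pos he, uu_succ, he.neg_one_pow, one_mul, hconj]
    have hglue : ex (2 * θ) * ex (-θ) = ex θ := by
      rw [← ex_add]; congr 1; ring
    calc uu α s * ex (2 * θ) * ((r:ℂ) * ex (-θ))
        = uu α s * (r:ℂ) * (ex (2 * θ) * ex (-θ)) := by ring
      _ = uu α s * (r:ℂ) * ex θ := by rw [hglue]
      _ = uu α s * ((r:ℂ) * ex θ) := by ring
  · have he1 : Even (s + 1) := Odd.add_one ho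
    rw [AA, AA, if_pos he1, if_neg (Nat.not_even_iff_odd.mpr ho), uu_succ, ho.neg_one_pow,
      hconj]
    have hglue : ex (-1 * (2 * θ)) * ex θ = ex (-θ) := by
      rw [← ex_add]; congr 1; ring
    calc uu α s * ex (-1 * (2 * θ)) * ((r:ℂ) * ex θ)
        = uu α s * (r:ℂ) * (ex (-1 * (2 * θ)) * ex θ) := by ring
      _ = uu α s * (r:ℂ) * ex (-θ) := by rw [hglue]
      _ = uu α s * ((r:ℂ) * ex (-θ)) := by ring

lemma AA_zero_arg (s : ℕ) : AA α s 0 = 0 := by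
  rw [AA]; split_ifs <;> simp

lemma uu_km1 (hk : 1 ≤ k) (hpos : ∀ i < k, 0 < α i)
    (hsum : ∑ i ∈ Finset.range k, α i = 2 * π) (heven : Even k)
    (halt : ∑ i ∈ Finset.range k, (-1:ℝ)^i * α i = 0) :
    uu α (k - 1) = 1 := by
  have hk1 : (k - 1) + 1 = k := Nat.succ_pred_eq_of_pos hk
  have hkm1odd : ¬ Even (k - 1) := by
    obtain ⟨m, hm⟩ := heven
    rw [Nat.even_iff]
    omega
  have hTalt := altSum_cumAngle α (k - 1)
  rw [if_neg hkm1odd, sub_zero] at hTalt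
  have hEkk : (∑ l ∈ Finset.range (k-1), if Even l then α l else 0)
      = ∑ l ∈ Finset.range k, if Even l then α l else 0 := by
    conv_rhs => rw [← hk1]
    rw [Finset.sum_range_succ, if_neg hkm1odd, add_zero]
  have haltE := altSum_eq α k
  rw [hsum, halt] at haltE
  -- 0 = 2 * E k - 2π hence E k = π
  have hpsi : psi α (k - 1) = 2 * π := by
    rw [psi, hTalt, hEkk]
    linarith
  rw [uu, hpsi, ex_two_pi]

lemma FF_eq (hk : 1 ≤ k) (hpos : ∀ i < k, 0 < α i)
    (hsum : ∑ i ∈ Finset.range k, α i = 2 * π) (heven : Even k)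
    (halt : ∑ i ∈ Finset.range k, (-1:ℝ)^i * α i = 0)
    {s : ℕ} (hsk : s + 1 ≤ k) {z : ℂ} (hz : z ∈ cSector α (s + 1)) :
    FF α k z = AA α s z := by
  have hck : cumAngle α k = 2 * π := hsum
  obtain ⟨r, t, hr, ht1, ht2, hzeq⟩ := hz
  simp only [Nat.add_sub_cancel] at ht1
  rcases eq_or_lt_of_le hr with hr0 | hr0
  · rw [hzeq, ← hr0]
    simp only [Complex.ofReal_zero, zero_mul]
    rw [FF, AA_zero_arg, AA_zero_arg]
  have ht0 : 0 ≤ t := le_trans (cumAngle_nonneg hpos (by omega)) ht1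
  have ht2pi : t ≤ 2 * π := le_trans ht2 (by rw [← hck]; exact cumAngle_mono hpos hsk le_rfl)
  rcases lt_or_eq_of_le ht2pi with hlt | heq2
  · -- t < 2π
    subst hzeq
    have hm : myarg ((r:ℂ) * ex t) = t := myarg_eq hr0 ht0 hlt
    have hs_le : s ≤ sIdx α k ((r:ℂ) * ex t) := by
      apply Nat.le_findGreatest (by omega)
      rw [hm]; exact ht1
    have hs_ge : sIdx α k ((r:ℂ) * ex t) ≤ s + 1 := by
      by_contra hgt
      push_neg at hgt
      have h1 : cumAngle α (s + 2) ≤ cumAngle α (sIdx α k ((r:ℂ) * ex t)) :=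
        cumAngle_mono hpos hgt (by have := sIdx_le (α := α) (k := k) ((r:ℂ) * ex t); omega)
      have h2 : cumAngle α (sIdx α k ((r:ℂ) * ex t)) ≤ t := by
        have := sIdx_spec (α := α) (k := k) ((r:ℂ) * ex t)
        rwa [hm] at this
      have h3 : cumAngle α (s + 1) < cumAngle α (s + 2) :=
        cumAngle_lt hpos (Nat.lt_succ_self _)
          (by have := sIdx_le (α := α) (k := k) ((r:ℂ) * ex t); omega)
      linarith
    rcases Nat.lt_or_ge (sIdx α k ((r:ℂ) * ex t)) (s + 1) with hcase | hcase
    · have : sIdx α k ((r:ℂ) * ex t) = s := by omega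
      rw [FF, this]
    · have hidx : sIdx α k ((r:ℂ) * ex t) = s + 1 := by omega
      have hteq : t = cumAngle α (s + 1) := by
        have := sIdx_spec (α := α) (k := k) ((r:ℂ) * ex t)
        rw [hidx, hm] at this
        linarith
      rw [FF, hidx, hteq]
      exact AA_step s r
  · -- t = 2π : wrap-around point
    have hs1k : s + 1 = k := by
      by_contra hne
      have : cumAngle α (s + 1) < cumAngle α k :=
        cumAngle_lt hpos (by omega) le_rfl
      rw [hck] at this
      linarith
    have hz2 : z = (r:ℂ) := by rw [hzeq, heq2, ex_two_pi, mul_one]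
    have hma : myarg z = 0 := by rw [hz2]; exact myarg_ofReal hr
    have hidx : sIdx α k z = 0 := by
      rw [sIdx, Nat.findGreatest_eq_zero_iff]
      intro n hn hnk
      rw [hma]
      push_neg
      have : cumAngle α 0 < cumAngle α n := cumAngle_lt hpos hn (by omega)
      rw [cumAngle_zero] at this
      linarith
    have hs' : s = k - 1 := by omega
    have hkm1odd : ¬ Even (k - 1) := by
      obtain ⟨m, hm⟩ := heven
      rw [Nat.even_iff]
      omega
    rw [FF, hidx, AA, if_pos Even.zero, AA, hs', if_neg hkm1odd,
      uu_km1 hk hpos hsum heven halt, hz2]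
    simp [uu, psi, ex]

lemma isClosed_cSector (i : ℕ) : IsClosed (cSector α i) := by
  apply IsSeqClosed.isClosed
  intro f z hmem hlim
  choose r t hr ht1 ht2 hz using hmem
  have htmem : ∀ n, t n ∈ Set.Icc (cumAngle α (i - 1)) (cumAngle α i) := fun n => ⟨ht1 n, ht2 n⟩
  obtain ⟨t0, ht0, φ, hφ, hconv⟩ := (isCompact_Icc).tendsto_subseq htmem
  have habs : ∀ n, r n = ‖f n‖ := by
    intro n
    rw [hz n, norm_mul, abs_ex, mul_one, Complex.norm_real, Real.norm_of_nonneg (hr n)]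
  have hflim : Filter.Tendsto (fun n => f (φ n)) Filter.atTop (nhds z) :=
    hlim.comp hφ.tendsto_atTop
  have hrconv : Filter.Tendsto (fun n => r (φ n)) Filter.atTop (nhds (‖z‖)) := by
    have := (continuous_norm.tendsto z).comp hflim
    refine this.congr ?_
    intro n
    exact (habs (φ n)).symm
  have hex_cont : Continuous ex := by
    have : Continuous fun t : ℝ => Complex.exp ((t : ℂ) * Complex.I) := by
      apply Complex.continuous_exp.comp
      exact (Complex.continuous_ofReal.mul continuous_const)
    exact this
  have hconv2 : Filter.Tendsto (fun n => ((r (φ n) : ℝ) : ℂ) * ex (t (φ n))) Filter.atTop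
      (nhds ((‖z‖ : ℂ) * ex t0)) :=
    ((Complex.continuous_ofReal.tendsto _).comp hrconv).mul ((hex_cont.tendsto _).comp hconv)
  have hzeq : z = (‖z‖ : ℂ) * ex t0 := by
    apply tendsto_nhds_unique (hflim.congr (fun n => hz (φ n))) hconv2
  exact ⟨‖z‖, t0, norm_nonneg z, ht0.1, ht0.2, hzeq⟩

lemma AA_continuous (s : ℕ) : Continuous (AA α s) := by
  by_cases h : Even s
  · have hA : AA α s = fun z => uu α s * z := by
      funext z; rw [AA, if_pos h]
    rw [hA]; exact continuous_const.mul continuous_id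
  · have hA : AA α s = fun z => uu α s * conj' z := by
      funext z; rw [AA, if_neg h]
    rw [hA]; exact continuous_const.mul continuous_star

lemma FF_continuous (hk : 1 ≤ k) (hpos : ∀ i < k, 0 < α i)
    (hsum : ∑ i ∈ Finset.range k, α i = 2 * π) (heven : Even k)
    (halt : ∑ i ∈ Finset.range k, (-1:ℝ)^i * α i = 0) :
    Continuous (FF α k) := by
  have hcover : (⋃ s : Fin k, cSector α (s.1 + 1)) = Set.univ := by
    ext z
    simp only [Set.mem_iUnion, Set.mem_univ, iff_true]
    refine ⟨⟨sIdx α k z, by have := sIdx_le (α := α) (k := k) z; omega⟩, ?_⟩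
    by_cases hz : z = 0
    · subst hz
      refine ⟨0, cumAngle α (sIdx α k 0), le_refl _, ?_, ?_, by simp⟩
      · simp only [Nat.add_sub_cancel]; exact le_refl _
      · exact cumAngle_mono hpos (Nat.le_succ _)
          (by have := sIdx_le (α := α) (k := k) (0:ℂ); omega)
    · refine ⟨‖z‖, myarg z, norm_nonneg z, ?_, ?_, self_eq_myarg hz⟩
      · simp only [Nat.add_sub_cancel]
        exact sIdx_spec z
      · exact (sIdx_lt hpos hsum hk z).le
  apply LocallyFinite.continuous (locallyFinite_of_finite _) hcover
    (fun s => isClosed_cSector _)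
  intro s
  apply (AA_continuous (α := α) s.1).continuousOn.congr
  intro z hz
  exact FF_eq hk hpos hsum heven halt (by omega) hz

end Reverse2

section Reverse3
local notation "conj'" => starRingEnd ℂ
variable {k : ℕ} {α : ℕ → ℝ}

lemma ex_zero : ex 0 = 1 := by simp [ex]

lemma reverse (hk : 1 ≤ k) (hpos : ∀ i < k, 0 < α i)
    (hsum : ∑ i ∈ Finset.range k, α i = 2 * π) (heven : Even k)
    (halt : ∑ i ∈ Finset.range k, (-1:ℝ)^i * α i = 0) :
    ∃ F : ℂ → ℂ, Continuous F ∧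
      (∀ i, 1 ≤ i → i ≤ k → ∀ x ∈ cSector α i, ∀ y ∈ cSector α i,
        dist (F x) (F y) = dist x y) ∧
      (∀ i, 1 ≤ i → i ≤ k → ∀ x ∈ cRay α i, x ≠ 0 → ¬ DifferentiableAt ℝ F x) := by
  have hck : cumAngle α k = 2 * π := hsum
  refine ⟨FF α k, FF_continuous hk hpos hsum heven halt, ?_, ?_⟩
  · intro i h1 h2 x hx y hy
    have hi : (i - 1) + 1 = i := Nat.succ_pred_eq_of_pos h1
    have hfx : FF α k x = AA α (i-1) x :=
      FF_eq hk hpos hsum heven halt (by omega) (by rw [hi]; exact hx)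
    have hfy : FF α k y = AA α (i-1) y :=
      FF_eq hk hpos hsum heven halt (by omega) (by rw [hi]; exact hy)
    rw [hfx, hfy, AA, AA]
    split_ifs with h
    · rw [Complex.dist_eq, Complex.dist_eq, ← mul_sub, norm_mul, abs_uu, one_mul]
    · rw [Complex.dist_eq, Complex.dist_eq, ← mul_sub, ← map_sub, norm_mul, abs_uu, one_mul,
        Complex.norm_conj]
  · intro i h1 h2 x hx hx0
    obtain ⟨r, hr0, hxeq⟩ := hx
    have hr : 0 < r := by
      rcases hr0.lt_or_eq with h | h
      · exact h
      · exfalso; apply hx0; rw [hxeq, ← h]; simp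
    have hiL : (i - 1) + 1 = i := Nat.succ_pred_eq_of_pos h1
    set θ := cumAngle α i with hθ
    subst hxeq
    set sR := if i = k then 0 else i with hsRdef
    -- basic endpoint values
    have hFxL : FF α k ((r:ℂ) * ex θ) = AA α (i-1) ((r:ℂ) * ex θ) := by
      apply FF_eq hk hpos hsum heven halt (by omega)
      rw [hiL]
      exact ⟨r, θ, hr0, cumAngle_mono hpos (Nat.sub_le i 1) h2, le_refl _, rfl⟩
    have hFxR : FF α k ((r:ℂ) * ex θ) = AA α sR ((r:ℂ) * ex θ) := by
      rw [hsRdef]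
      split_ifs with hik
      · apply FF_eq hk hpos hsum heven halt (by omega)
        refine ⟨r, 0, hr0, ?_, ?_, ?_⟩
        · simp [cumAngle_zero]
        · rw [← cumAngle_zero (α := α)]
          exact cumAngle_mono hpos (Nat.zero_le 1) (by omega)
        · rw [hθ, hik, hck, ex_two_pi, ex_zero]
      · apply FF_eq hk hpos hsum heven halt (by omega)
        refine ⟨r, θ, hr0, ?_, ?_, rfl⟩
        · simp only [Nat.add_sub_cancel]; exact le_refl _
        · exact cumAngle_mono hpos (Nat.le_succ i) (by omega)
    -- parities
    have hpar : Even (i - 1) ↔ ¬ Even sR := by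
      rw [hsRdef]
      split_ifs with hik
      · constructor
        · intro he
          exfalso
          obtain ⟨m, hm⟩ := heven
          rw [Nat.even_iff] at he
          omega
        · intro h
          exact absurd Even.zero h
      · rw [← hiL, Nat.even_add_one]
        tauto
    -- the two eventual formulas
    have hδL : 0 < cumAngle α i - cumAngle α (i - 1) :=
      sub_pos.mpr (cumAngle_lt hpos (by omega) h2)
    have hL : ∀ᶠ c in nhdsWithin (0:ℝ) (Set.Ioi 0),
        FF α k ((r:ℂ) * ex θ + c • (-(Complex.I * ((r:ℂ) * ex θ)))) =
          AA α (i-1) ((r:ℂ) * ex θ + c • (-(Complex.I * ((r:ℂ) * ex θ)))) := by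
      filter_upwards [Ioc_mem_nhdsGT_of_mem
        ⟨le_refl (0:ℝ), hδL⟩] with c hc
      obtain ⟨hc0, hcδ⟩ := hc
      have hpt : (r:ℂ) * ex θ + c • (-(Complex.I * ((r:ℂ) * ex θ)))
          = (Real.sqrt (r^2 + (-c*r)^2) : ℂ) * ex (θ + Real.arctan (-c)) := by
        rw [show c • (-(Complex.I * ((r:ℂ) * ex θ))) = (-c) • (Complex.I * ((r:ℂ) * ex θ)) by
          rw [neg_smul, smul_neg]]
        exact tangent_decomp θ (-c) hr
      rw [hpt]
      apply FF_eq hk hpos hsum heven halt (by omega)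
      rw [hiL]
      refine ⟨Real.sqrt (r^2 + (-c*r)^2), θ + Real.arctan (-c), Real.sqrt_nonneg _, ?_, ?_, rfl⟩
      · rw [Real.arctan_neg]
        have := arctan_le_self hc0
        rw [hθ]; linarith
      · rw [Real.arctan_neg]
        have h1 : 0 < Real.arctan c := by
          have := Real.arctan_strictMono hc0
          rwa [Real.arctan_zero] at this
        rw [hθ]; linarith
    have hδR : 0 < (if i = k then cumAngle α 1 else cumAngle α (i+1) - cumAngle α i) := by
      split_ifs with hik
      · have := cumAngle_lt hpos (show 0 < 1 by norm_num) (by omega)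
        rwa [cumAngle_zero] at this
      · exact sub_pos.mpr (cumAngle_lt hpos (Nat.lt_succ_self i) (by omega))
    have hR : ∀ᶠ c in nhdsWithin (0:ℝ) (Set.Ioi 0),
        FF α k ((r:ℂ) * ex θ + c • (Complex.I * ((r:ℂ) * ex θ))) =
          AA α sR ((r:ℂ) * ex θ + c • (Complex.I * ((r:ℂ) * ex θ))) := by
      filter_upwards [Ioc_mem_nhdsGT_of_mem ⟨le_refl (0:ℝ), hδR⟩] with c hc
      obtain ⟨hc0, hcδ⟩ := hc
      have hpt : (r:ℂ) * ex θ + c • (Complex.I * ((r:ℂ) * ex θ))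
          = (Real.sqrt (r^2 + (c*r)^2) : ℂ) * ex (θ + Real.arctan c) :=
        tangent_decomp θ c hr
      have harc0 : 0 < Real.arctan c := by
        have := Real.arctan_strictMono hc0
        rwa [Real.arctan_zero] at this
      have harc1 : Real.arctan c ≤ c := arctan_le_self hc0
      rw [hpt, hsRdef]
      split_ifs with hik
      · rw [if_pos hik] at hcδ
        have hθ2 : θ + Real.arctan c = 2 * π + Real.arctan c := by
          rw [hθ, hik, hck]
        have hpt2 : ex (θ + Real.arctan c) = ex (Real.arctan c) := by
          rw [hθ2, ex_add, ex_two_pi, one_mul]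
        rw [hpt2]
        apply FF_eq hk hpos hsum heven halt (by omega)
        refine ⟨Real.sqrt (r^2 + (c*r)^2), Real.arctan c, Real.sqrt_nonneg _, ?_, ?_, rfl⟩
        · rw [show (1:ℕ) - 1 = 0 from rfl, cumAngle_zero]; linarith
        · linarith
      · rw [if_neg hik] at hcδ
        apply FF_eq hk hpos hsum heven halt (by omega)
        refine ⟨Real.sqrt (r^2 + (c*r)^2), θ + Real.arctan c, Real.sqrt_nonneg _, ?_, ?_, rfl⟩
        · simp only [Nat.add_sub_cancel]; rw [hθ]; linarith
        · rw [hθ]; linarith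
    -- agreement at x
    have hmatch : AA α (i-1) ((r:ℂ) * ex θ) = AA α sR ((r:ℂ) * ex θ) := by
      rw [← hFxL, ← hFxR]
    -- split on parity
    by_cases hpL : Even (i - 1)
    · have hpR : ¬ Even sR := hpar.mp hpL
      have hALflat : ∀ z : ℂ, AA α (i-1) z = rotCLM (uu α (i-1)) z := by
        intro z; rw [AA, if_pos hpL, rotCLM_apply]
      have hARflat : ∀ z : ℂ, AA α sR z = reflCLM (uu α sR) z := by
        intro z; rw [AA, if_neg hpR, reflCLM_apply]
      apply not_diff (rotCLM (uu α (i-1))) (reflCLM (uu α sR))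
      · filter_upwards [hL] with c hc; rw [hc, hALflat]
      · filter_upwards [hR] with c hc; rw [hc, hARflat]
      · rw [hFxL, hALflat]
      · rw [hFxR, hARflat]
      · rw [rotCLM_apply, reflCLM_apply]
        apply rot_refl_sep (uu_ne _) hx0
        have := hmatch
        rw [hALflat, hARflat, rotCLM_apply, reflCLM_apply] at this
        exact this
    · have hpR : Even sR := by tauto
      have hALflat : ∀ z : ℂ, AA α (i-1) z = reflCLM (uu α (i-1)) z := by
        intro z; rw [AA, if_neg hpL, reflCLM_apply]
      have hARflat : ∀ z : ℂ, AA α sR z = rotCLM (uu α sR) z := by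
        intro z; rw [AA, if_pos hpR, rotCLM_apply]
      apply not_diff (reflCLM (uu α (i-1))) (rotCLM (uu α sR))
      · filter_upwards [hL] with c hc; rw [hc, hALflat]
      · filter_upwards [hR] with c hc; rw [hc, hARflat]
      · rw [hFxL, hALflat]
      · rw [hFxR, hARflat]
      · rw [rotCLM_apply, reflCLM_apply]
        apply Ne.symm
        apply rot_refl_sep (uu_ne _) hx0
        have := hmatch
        rw [hALflat, hARflat, rotCLM_apply, reflCLM_apply] at this
        exact this.symm

end Reverse3

section Transfer

lemma diff_transfer {F : ℂ → ℂ} {x : ℂ} (h : DifferentiableAt ℝ F x) :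
    DifferentiableAt ℝ (fun y => eqC (F (eqC.symm y))) (eqC x) := by
  have e1 : DifferentiableAt ℝ (fun y : EuclideanSpace ℝ (Fin 2) => (eqC.symm y : ℂ)) (eqC x) :=
    eqC.symm.toContinuousLinearEquiv.toContinuousLinearMap.differentiableAt
  have e2 : DifferentiableAt ℝ F (eqC.symm (eqC x)) := by
    rw [eqC.symm_apply_apply]; exact h
  have e3 := e2.comp (eqC x) e1
  have e4 : DifferentiableAt ℝ (eqC : ℂ → EuclideanSpace ℝ (Fin 2))
      ((fun y => F (eqC.symm y)) (eqC x)) :=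
    eqC.toContinuousLinearEquiv.toContinuousLinearMap.differentiableAt
  exact e4.comp (eqC x) e3

lemma diff_transfer' {g : EuclideanSpace ℝ (Fin 2) → EuclideanSpace ℝ (Fin 2)}
    {p : EuclideanSpace ℝ (Fin 2)} (h : DifferentiableAt ℝ g p) :
    DifferentiableAt ℝ (fun z : ℂ => eqC.symm (g (eqC z))) (eqC.symm p) := by
  have e1 : DifferentiableAt ℝ (fun z : ℂ => eqC z) (eqC.symm p) :=
    eqC.toContinuousLinearEquiv.toContinuousLinearMap.differentiableAt
  have e2 : DifferentiableAt ℝ g (eqC (eqC.symm p)) := by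
    rw [eqC.apply_symm_apply]; exact h
  have e3 := e2.comp (eqC.symm p) e1
  have e4 : DifferentiableAt ℝ (eqC.symm : EuclideanSpace ℝ (Fin 2) → ℂ)
      ((fun z => g (eqC z)) (eqC.symm p)) :=
    eqC.symm.toContinuousLinearEquiv.toContinuousLinearMap.differentiableAt
  exact e4.comp (eqC.symm p) e3

end Transfer

end Kawasaki

set_option maxHeartbeats 1000000 in
theorem kawasaki (k : ℕ) (hk : 1 ≤ k) (α : ℕ → ℝ)
    (hpos : ∀ i < k, 0 < α i)
    (hsum : ∑ i ∈ Finset.range k, α i = 2 * π) :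
    (∃ f : EuclideanSpace ℝ (Fin 2) → EuclideanSpace ℝ (Fin 2),
      Continuous f ∧
      (∀ i, 1 ≤ i → i ≤ k → ∀ x ∈ sector α i, ∀ y ∈ sector α i,
        dist (f x) (f y) = dist x y) ∧
      (∀ i, 1 ≤ i → i ≤ k → ∀ x ∈ creaseRay α i, x ≠ 0 → ¬ DifferentiableAt ℝ f x)) ↔
    (Even k ∧ ∑ i ∈ Finset.range k, (-1 : ℝ) ^ i * α i = 0) := by
  open Kawasaki in
  constructor
  · rintro ⟨f, hcont, hiso, hnd⟩
    apply Kawasaki.forward hk hpos hsum (F := fun z => eqC.symm (f (eqC z)))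
    · intro i h1 h2 x hx y hy
      rw [eqC.symm.dist_map]
      rw [show dist x y = dist (eqC x) (eqC y) from (eqC.dist_map x y).symm]
      exact hiso i h1 h2 _ ((Kawasaki.mem_sector_iff α i x).mpr hx) _
        ((Kawasaki.mem_sector_iff α i y).mpr hy)
    · intro i h1 h2 x hx hx0 hdiff
      have hxe : eqC x ≠ 0 := by
        intro h
        apply hx0
        have := congrArg eqC.symm h
        simpa using this
      apply hnd i h1 h2 (eqC x) ((Kawasaki.mem_ray_iff α i x).mpr hx) hxe
      have := Kawasaki.diff_transfer hdiff
      simpa only [LinearIsometryEquiv.apply_symm_apply] using this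
  · rintro ⟨heven, halt⟩
    obtain ⟨F, hcont, hiso, hnd⟩ := Kawasaki.reverse hk hpos hsum heven halt
    refine ⟨fun p => eqC (F (eqC.symm p)), ?_, ?_, ?_⟩
    · exact eqC.continuous.comp (hcont.comp eqC.symm.continuous)
    · intro i h1 h2 x hx y hy
      rw [eqC.dist_map]
      rw [show dist x y = dist (eqC.symm x) (eqC.symm y) from (eqC.symm.dist_map x y).symm]
      apply hiso i h1 h2
      · rw [← Kawasaki.mem_sector_iff α i, eqC.apply_symm_apply]; exact hx
      · rw [← Kawasaki.mem_sector_iff α i, eqC.apply_symm_apply]; exact hy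
    · intro i h1 h2 x hx hx0 hdiff
      have hxe : eqC.symm x ≠ 0 := by
        intro h
        apply hx0
        have := congrArg eqC h
        simpa using this
      apply hnd i h1 h2 (eqC.symm x) ?_ hxe
      · have := Kawasaki.diff_transfer' hdiff
        simpa only [LinearIsometryEquiv.symm_apply_apply] using this
      · rw [← Kawasaki.mem_ray_iff α i, eqC.apply_symm_apply]; exact hx
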